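/- arXiv:1804.06959 — 2 statements merged into one kernel-verified Lean document; each statement's English description precedes it below -/
import Mathlib

section
/- Let M be a finite matroid with the (t,2t)-property, and let (S₁, …, S_n) be a t-echidna of M with n ≥ 3t − 1. Let I be a (t−1)-element subset of {1, …, n}. Then for every z ∈ E(M) − ⋃_{i∈I} S_i, there is a 2t-element circuit of M containing {z} ∪ ⋃_{i∈I} S_i, and there is a 2t-element cocircuit of M containing {z} ∪ ⋃_{i∈I} S_i. -/
open Set

/-- A circuit of a matroid: a minimal dependent set. -/
def IsCircuit {α : Type*} (M : Matroid α) (C : Set α) : Prop :=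
  M.Dep C ∧ ∀ D, D ⊂ C → ¬ M.Dep D

/-- A cocircuit of a matroid: a circuit of the dual. -/
def IsCocircuit {α : Type*} (M : Matroid α) (C : Set α) : Prop :=
  IsCircuit M✶ C

/-- `M` has the `(t,ℓ)`-property: every `t`-element subset of the ground set is contained
in an `ℓ`-element circuit and an `ℓ`-element cocircuit. -/
def HasTLProperty {α : Type*} (M : Matroid α) (t ℓ : ℕ) : Prop :=
  ∀ X ⊆ M.E, X.ncard = t →
    (∃ C, IsCircuit M C ∧ C.ncard = ℓ ∧ X ⊆ C) ∧
    (∃ C, IsCocircuit M C ∧ C.ncard = ℓ ∧ X ⊆ C)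

/-- A `t`-echidna of order `n` in `M`: a partition `(S 1, …, S n)` of a subset of the
ground set into `2`-element sets such that the union of any `t` of them is a circuit. -/
def IsEchidna {α : Type*} (M : Matroid α) (t : ℕ) {n : ℕ} (S : Fin n → Set α) : Prop :=
  (∀ i, (S i).ncard = 2) ∧ (∀ i, S i ⊆ M.E) ∧
    (∀ i j, i ≠ j → Disjoint (S i) (S j)) ∧
    ∀ I : Finset (Fin n), I.card = t → IsCircuit M (⋃ i ∈ I, S i)

section Aux

variable {α : Type*} {M : Matroid α} {C K : Set α} {e : α}

lemma IsCircuit.diff_singleton_indep (hC : IsCircuit M C) (he : e ∈ C) :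
    M.Indep (C \ {e}) := by
  by_contra h
  exact hC.2 _ (Set.sdiff_singleton_ssubset.2 he)
    ⟨h, diff_subset.trans hC.1.subset_ground⟩

lemma IsCircuit.mem_closure_diff (hC : IsCircuit M C) (he : e ∈ C) :
    e ∈ M.closure (C \ {e}) := by
  by_contra h
  have hi := hC.diff_singleton_indep he
  have hins : M.Indep (insert e (C \ {e})) :=
    (hi.insert_indep_iff_of_notMem (by simp)).2 ⟨hC.1.subset_ground he, h⟩
  rw [insert_diff_singleton, insert_eq_of_mem he] at hins
  exact hC.1.not_indep hins

lemma circuit_cocircuit_orth (hC : IsCircuit M C) (hK : IsCocircuit M K)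
    (heC : e ∈ C) (heK : e ∈ K) (hsub : C ∩ K ⊆ {e}) : False := by
  have hKE : K ⊆ M.E := by
    have := hK.1.subset_ground; rwa [Matroid.dual_ground] at this
  have heE : e ∈ M.E := hKE heK
  have hKd : M✶.Indep (K \ {e}) := hK.diff_singleton_indep heK
  have hsp : M.Spanning (M.E \ (K \ {e})) := Matroid.Coindep.compl_spanning hKd
  have hset : M.E \ (K \ {e}) = insert e (M.E \ K) := by
    ext x
    simp only [mem_diff, mem_singleton_iff, mem_insert_iff, not_and, not_not]
    constructor
    · rintro ⟨hxE, h2⟩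
      by_cases hx : x = e
      · exact Or.inl hx
      · exact Or.inr ⟨hxE, fun hxK => hx (h2 hxK)⟩
    · rintro (rfl | ⟨hxE, hxK⟩)
      · exact ⟨heE, fun _ => rfl⟩
      · exact ⟨hxE, fun h => absurd h hxK⟩
  have hnsp : ¬ M.Spanning (M.E \ K) := by
    intro h
    exact hK.1.not_indep ((Matroid.coindep_iff_compl_spanning hKE).2 h)
  have hCsub : C \ {e} ⊆ M.E \ K := fun x hx =>
    ⟨hC.1.subset_ground hx.1, fun hxK => hx.2 (hsub ⟨hx.1, hxK⟩)⟩
  have hecl : e ∈ M.closure (M.E \ K) :=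
    M.closure_subset_closure hCsub (hC.mem_closure_diff heC)
  have hcleq : M.closure (insert e (M.E \ K)) = M.closure (M.E \ K) :=
    Matroid.closure_insert_eq_of_mem_closure hecl
  apply hnsp
  rw [Matroid.spanning_iff_closure_eq diff_subset, ← hcleq, ← hset]
  exact (Matroid.spanning_iff_closure_eq diff_subset).1 hsp

lemma ncard_biUnion_pairs {n : ℕ} (S : Fin n → Set α) (hfinS : ∀ i, (S i).Finite)
    (h2 : ∀ i, (S i).ncard = 2) (hdisj : ∀ i j, i ≠ j → Disjoint (S i) (S j))
    (J : Finset (Fin n)) : (⋃ j ∈ J, S j).ncard = 2 * J.card := by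
  classical
  induction J using Finset.induction_on with
  | empty => simp
  | @insert a J haJ ih =>
    rw [Finset.set_biUnion_insert]
    have hdJ : Disjoint (S a) (⋃ j ∈ J, S j) := by
      rw [Set.disjoint_left]
      rintro x hxa hxU
      obtain ⟨j, hj, hxj⟩ := mem_iUnion₂.1 hxU
      exact (hdisj a j (fun h => haJ (h ▸ hj))).ne_of_mem hxa hxj rfl
    have hfU : (⋃ j ∈ J, S j).Finite :=
      Set.Finite.biUnion J.finite_toSet (fun j _ => hfinS j)
    rw [Set.ncard_union_eq hdJ (hfinS a) hfU, ih, h2 a,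
      Finset.card_insert_of_notMem haJ]
    ring

lemma key_lemma {n t : ℕ} (M : Matroid α) (S : Fin n → Set α)
    (h2 : ∀ i, (S i).ncard = 2) (hfinS : ∀ i, (S i).Finite)
    (hdisj : ∀ i j, i ≠ j → Disjoint (S i) (S j))
    (hco : ∀ J : Finset (Fin n), J.card = t → IsCocircuit M (⋃ j ∈ J, S j))
    (C : Set α) (hC : IsCircuit M C) (hCfin : C.Finite)
    (A : Finset (Fin n)) (hAC : ∀ a ∈ A, (S a ∩ C).Nonempty)
    (hbound : (C \ ⋃ a ∈ A, S a).ncard + A.card + (t - 1) ≤ n)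
    (ht : 0 < t) :
    ∀ a ∈ A, S a ⊆ C := by
  classical
  intro a ha
  by_contra hnot
  obtain ⟨x, hxS, hxC⟩ := not_subset.1 hnot
  obtain ⟨e, heS, heC⟩ := hAC a ha
  haveI : Nonempty α := ⟨e⟩
  set Bad : Finset (Fin n) := Finset.univ.filter (fun j => (S j ∩ C).Nonempty) with hBad
  let f : Fin n → α := fun j =>
    if h : (S j ∩ C).Nonempty then h.some else Classical.arbitrary α
  have hf : ∀ j ∈ Bad, f j ∈ S j ∩ C := by
    intro j hj
    rw [hBad, Finset.mem_filter] at hj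
    simp only [f, dif_pos hj.2]
    exact hj.2.some_mem
  have hfinj : Set.InjOn f ↑(Bad \ A) := by
    intro i hi j hj hij
    by_contra hne
    have h1 := hf i (Finset.mem_sdiff.1 (Finset.mem_coe.1 hi)).1
    have h2' := hf j (Finset.mem_sdiff.1 (Finset.mem_coe.1 hj)).1
    exact (hdisj i j hne).ne_of_mem h1.1 h2'.1 hij
  have himg : f '' ↑(Bad \ A) ⊆ C \ ⋃ b ∈ A, S b := by
    rintro _ ⟨j, hj, rfl⟩
    have hjB := (Finset.mem_sdiff.1 (Finset.mem_coe.1 hj)).1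
    have hjA := (Finset.mem_sdiff.1 (Finset.mem_coe.1 hj)).2
    refine ⟨(hf j hjB).2, ?_⟩
    intro hmem
    obtain ⟨b, hb, hmem⟩ := mem_iUnion₂.1 hmem
    exact (hdisj j b (fun h => hjA (h ▸ hb))).ne_of_mem (hf j hjB).1 hmem rfl
  have hcard1 : (Bad \ A).card ≤ (C \ ⋃ b ∈ A, S b).ncard := by
    calc (Bad \ A).card = (↑(Bad \ A) : Set (Fin n)).ncard :=
          (Set.ncard_coe_finset _).symm
      _ = (f '' ↑(Bad \ A)).ncard := (Set.ncard_image_of_injOn hfinj).symm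
      _ ≤ (C \ ⋃ b ∈ A, S b).ncard :=
          Set.ncard_le_ncard himg (hCfin.subset diff_subset)
  have hcard2 : Bad.card ≤ A.card + (C \ ⋃ b ∈ A, S b).ncard := by
    have h3 := Finset.card_inter_add_card_sdiff Bad A
    have h4 : (Bad ∩ A).card ≤ A.card := Finset.card_le_card Finset.inter_subset_right
    omega
  have hgood : t - 1 ≤ (Finset.univ \ Bad).card := by
    have h4 : (Finset.univ \ Bad).card = n - Bad.card := by
      rw [Finset.card_sdiff_of_subset (Finset.subset_univ _), Finset.card_univ, Fintype.card_fin]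
    omega
  obtain ⟨G, hGsub, hGcard⟩ := Finset.exists_subset_card_eq hgood
  have hGgood : ∀ j ∈ G, S j ∩ C = ∅ := by
    intro j hj
    have hjm := hGsub hj
    rw [Finset.mem_sdiff] at hjm
    by_contra h
    exact hjm.2 (Finset.mem_filter.2 ⟨Finset.mem_univ _, nonempty_iff_ne_empty.2 h⟩)
  have haG : a ∉ G := fun h => (hAC a ha).ne_empty (hGgood a h)
  have hJcard : (insert a G).card = t := by
    rw [Finset.card_insert_of_notMem haG, hGcard]; omega
  have hKco := hco (insert a G) hJcard
  have hsingle : S a ∩ C ⊆ {e} := by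
    have h1 : (S a \ {x}).ncard = 1 := by
      rw [Set.ncard_diff_singleton_of_mem hxS, h2 a]
    obtain ⟨y, hy⟩ := Set.ncard_eq_one.1 h1
    have hey : e = y := by
      have hm : e ∈ S a \ {x} := ⟨heS, fun h => hxC (h ▸ heC)⟩
      rw [hy] at hm; exact hm
    intro w hw
    have hm : w ∈ S a \ {x} := ⟨hw.1, fun h => hxC (h ▸ hw.2)⟩
    rw [hy] at hm
    rw [hm, ← hey]
    rfl
  have hinter : C ∩ (⋃ j ∈ insert a G, S j) ⊆ {e} := by
    rintro w ⟨hwC, hwU⟩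
    obtain ⟨j, hj, hwS⟩ := mem_iUnion₂.1 hwU
    rcases Finset.mem_insert.1 hj with rfl | hjG
    · exact hsingle ⟨hwS, hwC⟩
    · have hmem : w ∈ S j ∩ C := ⟨hwS, hwC⟩
      rw [hGgood j hjG] at hmem
      exact absurd hmem (notMem_empty w)
  have heU : e ∈ ⋃ j ∈ insert a G, S j :=
    mem_iUnion₂.2 ⟨a, Finset.mem_insert_self a G, heS⟩
  exact circuit_cocircuit_orth hC hKco heC heU hinter

lemma coechidna {t n : ℕ} (M : Matroid α) (hfin : M.E.Finite) (ht : 0 < t)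
    (hprop : HasTLProperty M t (2 * t)) (hn : 3 * t - 1 ≤ n)
    (S : Fin n → Set α) (hech : IsEchidna M t S)
    (J : Finset (Fin n)) (hJ : J.card = t) :
    IsCocircuit M (⋃ j ∈ J, S j) := by
  classical
  obtain ⟨h2, hSE, hdisj, hcirc⟩ := hech
  have hfinS : ∀ i, (S i).Finite := fun i => hfin.subset (hSE i)
  have hSne : ∀ i, (S i).Nonempty := fun i =>
    Set.nonempty_of_ncard_ne_zero (by rw [h2 i]; omega)
  choose s hs using hSne
  have hinj : Set.InjOn s ↑J := by
    intro i _ j _ h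
    by_contra hne
    exact (hdisj i j hne).ne_of_mem (hs i) (hs j) h
  have hTcard : (s '' ↑J).ncard = t := by
    rw [Set.ncard_image_of_injOn hinj, Set.ncard_coe_finset, hJ]
  have hTE : s '' ↑J ⊆ M.E := by
    rintro _ ⟨j, _, rfl⟩; exact hSE j (hs j)
  obtain ⟨-, K, hK, hKcard, hTK⟩ := hprop (s '' ↑J) hTE hTcard
  have hKE : K ⊆ M.E := by
    have := hK.1.subset_ground; rwa [Matroid.dual_ground] at this
  have hKfin : K.Finite := hfin.subset hKE
  have hXfin : (⋃ j ∈ J, S j).Finite :=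
    Set.Finite.biUnion J.finite_toSet (fun j _ => hfinS j)
  have hXcard : (⋃ j ∈ J, S j).ncard = 2 * t := by
    rw [ncard_biUnion_pairs S hfinS h2 hdisj, hJ]
  have hsub1 : s '' ↑J ⊆ K ∩ ⋃ j ∈ J, S j := by
    rintro _ ⟨j, hj, rfl⟩
    exact ⟨hTK ⟨j, hj, rfl⟩, mem_iUnion₂.2 ⟨j, Finset.mem_coe.1 hj, hs j⟩⟩
  have hKX : t ≤ (K ∩ ⋃ j ∈ J, S j).ncard := by
    rw [← hTcard]
    exact Set.ncard_le_ncard hsub1 (hKfin.inter_of_left _)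
  have hdiffcard : (K \ ⋃ j ∈ J, S j).ncard ≤ t := by
    have h6 := Set.ncard_inter_add_ncard_diff_eq_ncard K (⋃ j ∈ J, S j) hKfin
    omega
  have hco' : ∀ J' : Finset (Fin n), J'.card = t → IsCocircuit M✶ (⋃ j ∈ J', S j) := by
    intro J' hJ'
    have := hcirc J' hJ'
    simpa [IsCocircuit, Matroid.dual_dual] using this
  have hall : ∀ j ∈ J, S j ⊆ K := by
    apply key_lemma M✶ S h2 hfinS hdisj hco' K hK hKfin J
    · intro b hb
      exact ⟨s b, hs b, hTK ⟨b, Finset.mem_coe.2 hb, rfl⟩⟩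
    · rw [hJ]; omega
    · exact ht
  have hXK : (⋃ j ∈ J, S j) ⊆ K := iUnion₂_subset hall
  have hEq : (⋃ j ∈ J, S j) = K :=
    Set.eq_of_subset_of_ncard_le hXK (by rw [hXcard, hKcard]) hKfin
  rw [hEq]
  exact hK

end Aux

theorem statement6 {α : Type*} (M : Matroid α) (hfin : M.E.Finite) (t n : ℕ) (ht : 0 < t)
    (hprop : HasTLProperty M t (2 * t)) (hn : 3 * t - 1 ≤ n)
    (S : Fin n → Set α) (hech : IsEchidna M t S)
    (I : Finset (Fin n)) (hI : I.card = t - 1)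
    (z : α) (hz : z ∈ M.E \ ⋃ i ∈ I, S i) :
    (∃ C, IsCircuit M C ∧ C.ncard = 2 * t ∧ insert z (⋃ i ∈ I, S i) ⊆ C) ∧
    (∃ C, IsCocircuit M C ∧ C.ncard = 2 * t ∧ insert z (⋃ i ∈ I, S i) ⊆ C) := by
  classical
  obtain ⟨h2, hSE, hdisj, hcirc⟩ := hech
  have hfinS : ∀ i, (S i).Finite := fun i => hfin.subset (hSE i)
  have hSne : ∀ i, (S i).Nonempty := fun i =>
    Set.nonempty_of_ncard_ne_zero (by rw [h2 i]; omega)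
  choose s hs using hSne
  obtain ⟨hzE, hzX⟩ := hz
  have hinj : Set.InjOn s ↑I := by
    intro i _ j _ h
    by_contra hne
    exact (hdisj i j hne).ne_of_mem (hs i) (hs j) h
  have hscard : (s '' ↑I).ncard = t - 1 := by
    rw [Set.ncard_image_of_injOn hinj, Set.ncard_coe_finset, hI]
  have hzs : z ∉ s '' ↑I := by
    rintro ⟨j, hj, hzj⟩
    exact hzX (mem_iUnion₂.2 ⟨j, Finset.mem_coe.1 hj, hzj ▸ hs j⟩)
  have hTfin : (s '' ↑I).Finite := I.finite_toSet.image s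
  have hTcard : (insert z (s '' ↑I)).ncard = t := by
    rw [Set.ncard_insert_of_notMem hzs hTfin, hscard]; omega
  have hTE : insert z (s '' ↑I) ⊆ M.E := by
    refine insert_subset hzE ?_
    rintro _ ⟨j, _, rfl⟩; exact hSE j (hs j)
  obtain ⟨⟨C, hC, hCcard, hTC⟩, K, hK, hKcard, hTK⟩ := hprop _ hTE hTcard
  have hbound : ∀ D : Set α, D.Finite → D.ncard = 2 * t → insert z (s '' ↑I) ⊆ D →
      (D \ ⋃ i ∈ I, S i).ncard + I.card + (t - 1) ≤ n := by
    intro D hDfin hDcard hTD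
    have hsub : s '' ↑I ⊆ D ∩ ⋃ i ∈ I, S i := by
      rintro _ ⟨j, hj, rfl⟩
      exact ⟨hTD (mem_insert_of_mem _ ⟨j, hj, rfl⟩),
        mem_iUnion₂.2 ⟨j, Finset.mem_coe.1 hj, hs j⟩⟩
    have h5 : t - 1 ≤ (D ∩ ⋃ i ∈ I, S i).ncard := by
      rw [← hscard]
      exact Set.ncard_le_ncard hsub (hDfin.inter_of_left _)
    have h6 := Set.ncard_inter_add_ncard_diff_eq_ncard D (⋃ i ∈ I, S i) hDfin
    rw [hI]
    omega
  have hAC : ∀ D : Set α, insert z (s '' ↑I) ⊆ D → ∀ a ∈ I, (S a ∩ D).Nonempty :=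
    fun D hTD a ha =>
      ⟨s a, hs a, hTD (mem_insert_of_mem _ ⟨a, Finset.mem_coe.2 ha, rfl⟩)⟩
  have hCfin : C.Finite := hfin.subset hC.1.subset_ground
  have hKE : K ⊆ M.E := by
    have := hK.1.subset_ground; rwa [Matroid.dual_ground] at this
  have hKfin : K.Finite := hfin.subset hKE
  constructor
  · refine ⟨C, hC, hCcard, ?_⟩
    have hall := key_lemma M S h2 hfinS hdisj
      (fun J hJ => coechidna M hfin ht hprop hn S ⟨h2, hSE, hdisj, hcirc⟩ J hJ)
      C hC hCfin I (hAC C hTC) (hbound C hCfin hCcard hTC) ht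
    exact insert_subset (hTC (mem_insert _ _))
      (iUnion₂_subset fun i hi => hall i hi)
  · refine ⟨K, hK, hKcard, ?_⟩
    have hco' : ∀ J' : Finset (Fin n), J'.card = t → IsCocircuit M✶ (⋃ j ∈ J', S j) := by
      intro J' hJ'
      have := hcirc J' hJ'
      simpa [IsCocircuit, Matroid.dual_dual] using this
    have hall := key_lemma M✶ S h2 hfinS hdisj hco' K hK hKfin I
      (hAC K hTK) (hbound K hKfin hKcard hTK) ht
    exact insert_subset (hTK (mem_insert _ _))
      (iUnion₂_subset fun i hi => hall i hi)
end

section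
/- Let M be a finite matroid with the (t,2t)-property, let C*₁, …, C*_{t−1} be pairwise disjoint cocircuits of M, and let Y = E(M) − ⋃_{i=1}^{t−1} C*_i. Then for every y ∈ Y there is a 2t-element circuit C_y of M containing y such that either (1) |C_y ∩ C*_i| = 2 for all i ∈ {1,…,t−1}, or (2) |C_y ∩ C*_j| = 3 for some j ∈ {1,…,t−1} and |C_y ∩ C*_i| = 2 for all i ∈ {1,…,t−1} − {j}. Moreover, if C_y = S ∪ {y} satisfies (2), then there are at most 3t − 1 elements w ∈ Y such that S ∪ {w} is a circuit of M. -/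
open Set

section Aux

variable {α : Type*} {M : Matroid α} {Cc D X : Set α} {e : α}

lemma IsCircuit.subset_ground' (h : IsCircuit M Cc) : Cc ⊆ M.E := h.1.subset_ground

lemma IsCircuit.ssubset_indep (h : IsCircuit M Cc) (hX : X ⊂ Cc) : M.Indep X :=
  Matroid.indep_of_not_dep (h.2 X hX) (hX.subset.trans h.1.subset_ground)

lemma IsCocircuit.subset_ground' (h : IsCocircuit M D) : D ⊆ M.E := by
  have := h.1.subset_ground; rwa [Matroid.dual_ground] at this

lemma IsCocircuit.nonempty' (h : IsCocircuit M D) : D.Nonempty := h.1.nonempty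

/-- No element of a cocircuit is spanned by the complement of the cocircuit. -/
lemma IsCocircuit.not_mem_closure_compl (h : IsCocircuit M D) (he : e ∈ D) :
    e ∉ M.closure (M.E \ D) := by
  intro hecl
  have hDE : D ⊆ M.E := h.subset_ground'
  have heE : e ∈ M.E := hDE he
  have hnsp : ¬ M.Spanning (M.E \ D) := fun hsp =>
    h.1.not_indep ((Matroid.coindep_iff_compl_spanning hDE).2 hsp)
  have hind : M✶.Indep (D \ {e}) := by
    refine Matroid.indep_of_not_dep (h.2 _ (sdiff_singleton_ssubset.2 he)) ?_
    rw [Matroid.dual_ground]; exact diff_subset.trans hDE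
  have hsp2 : M.Spanning (M.E \ (D \ {e})) :=
    (Matroid.coindep_iff_compl_spanning (diff_subset.trans hDE)).1 hind
  have hset : M.E \ (D \ {e}) = insert e (M.E \ D) := by
    ext z
    simp only [mem_diff, mem_singleton_iff, mem_insert_iff, not_and, not_not]
    constructor
    · rintro ⟨hzE, h2⟩
      by_cases hz : z = e
      · exact Or.inl hz
      · exact Or.inr ⟨hzE, fun hzD => hz (h2 hzD)⟩
    · rintro (rfl | ⟨h1, h2⟩)
      · exact ⟨heE, fun _ => rfl⟩
      · exact ⟨h1, fun hzD => absurd hzD h2⟩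
  rw [hset] at hsp2
  apply hnsp
  rw [Matroid.spanning_iff_closure_eq diff_subset]
  refine subset_antisymm (M.closure_subset_ground _) ?_
  have h1 : M.closure (insert e (M.E \ D)) = M.E :=
    (Matroid.spanning_iff_closure_eq (insert_subset heE diff_subset)).1 hsp2
  have h2 : insert e (M.E \ D) ⊆ M.closure (M.E \ D) :=
    insert_subset hecl (M.subset_closure _ diff_subset)
  calc M.E = M.closure (insert e (M.E \ D)) := h1.symm
  _ ⊆ M.closure (M.closure (M.E \ D)) := M.closure_subset_closure h2
  _ = M.closure (M.E \ D) := M.closure_closure _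

/-- Orthogonality: a circuit and a cocircuit never meet in exactly one element. -/
lemma circ_cocirc_inter_ne_singleton (hCc : IsCircuit M Cc) (hD : IsCocircuit M D) (e : α) :
    Cc ∩ D ≠ {e} := by
  intro h
  have he : e ∈ Cc ∩ D := by rw [h]; exact mem_singleton e
  have heC : e ∈ Cc := he.1
  have heD : e ∈ D := he.2
  have hind : M.Indep (Cc \ {e}) := hCc.ssubset_indep (sdiff_singleton_ssubset.2 heC)
  have hecl : e ∈ M.closure (Cc \ {e}) := by
    rw [hind.mem_closure_iff]
    left
    rw [insert_diff_singleton, insert_eq_of_mem heC]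
    exact hCc.1
  have hsub : Cc \ {e} ⊆ M.E \ D := by
    rintro z ⟨hzC, hze⟩
    refine ⟨hCc.subset_ground' hzC, fun hzD => hze ?_⟩
    rw [← h]; exact ⟨hzC, hzD⟩
  exact hD.not_mem_closure_compl heD (M.closure_subset_closure hsub hecl)

/-- With the `(t,2t)`-property, every circuit has more than `t` elements. -/
lemma circuit_ncard_gt {t : ℕ} (ht : 0 < t)
    (hprop : HasTLProperty M t (2 * t)) (hE : t ≤ M.E.ncard)
    {R : Set α} (hR : IsCircuit M R) : t < R.ncard := by
  by_contra hle
  push_neg at hle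
  obtain ⟨X0, hRX0, hX0E, hX0card⟩ :=
    Set.exists_subsuperset_card_eq hR.subset_ground' hle hE
  obtain ⟨⟨C2, hC2, hC2card, hXC2⟩, -⟩ := hprop X0 hX0E hX0card
  have hss : R ⊂ C2 := by
    refine (hRX0.trans hXC2).ssubset_of_ne ?_
    rintro rfl
    omega
  exact hC2.2 R hss hR.1

/-- Every dependent set contains a circuit (finite case). -/
lemma exists_circuit_subset_aux (hfin : M.E.Finite) :
    ∀ (n : ℕ) (D0 : Set α), D0.ncard ≤ n → M.Dep D0 → ∃ Cc, Cc ⊆ D0 ∧ IsCircuit M Cc := by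
  intro n
  induction n with
  | zero =>
    intro D0 hcard hdep
    rw [Nat.le_zero, Set.ncard_eq_zero (hfin.subset hdep.subset_ground)] at hcard
    rw [hcard] at hdep
    exact absurd M.empty_indep hdep.not_indep
  | succ n ih =>
    intro D0 hcard hdep
    by_cases hmin : ∀ D' ⊂ D0, ¬ M.Dep D'
    · exact ⟨D0, Subset.rfl, hdep, hmin⟩
    · push_neg at hmin
      obtain ⟨D', hss, hdep'⟩ := hmin
      obtain ⟨Cc, h1, h2⟩ := ih D' (by
        have := Set.ncard_lt_ncard hss (hfin.subset hdep.subset_ground)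
        omega) hdep'
      exact ⟨Cc, h1.trans hss.subset, h2⟩

lemma exists_circuit_subset (hfin : M.E.Finite) {D0 : Set α} (hdep : M.Dep D0) :
    ∃ Cc, Cc ⊆ D0 ∧ IsCircuit M Cc :=
  exists_circuit_subset_aux hfin D0.ncard D0 le_rfl hdep

/-- The cardinality of a pairwise disjoint finite union as a sum. -/
lemma ncard_biUnion_eq {ι : Type*} [DecidableEq ι] (s : Finset ι) (f : ι → Set α)
    (hf : ∀ i, (f i).Finite) (hd : ∀ i j, i ≠ j → Disjoint (f i) (f j)) :
    (⋃ i ∈ s, f i).ncard = ∑ i ∈ s, (f i).ncard := by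
  classical
  induction s using Finset.induction with
  | empty => simp
  | @insert a s ha ih =>
    have hdj : Disjoint (f a) (⋃ x ∈ s, f x) := by
      refine Set.disjoint_left.2 fun {z} hz1 hz2 => ?_
      obtain ⟨i, hi, hzi⟩ := Set.mem_iUnion₂.1 hz2
      exact Set.disjoint_left.1 (hd a i fun h => ha (h ▸ hi)) hz1 hzi
    have hfin' : (⋃ x ∈ s, f x).Finite := s.finite_toSet.biUnion fun i _ => hf i
    rw [Finset.sum_insert ha, ← ih, Finset.set_biUnion_insert,
      Set.ncard_union_eq hdj (hf a) hfin']

end Aux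

theorem statement10 {α : Type*} (M : Matroid α) (hfin : M.E.Finite) (t : ℕ) (ht : 0 < t)
    (hprop : HasTLProperty M t (2 * t))
    (C : Fin (t - 1) → Set α) (hC : ∀ i, IsCocircuit M (C i))
    (hdisj : ∀ i j, i ≠ j → Disjoint (C i) (C j)) :
    ∀ y ∈ M.E \ ⋃ i, C i,
      ∃ Cy, IsCircuit M Cy ∧ Cy.ncard = 2 * t ∧ y ∈ Cy ∧
        ((∀ i, (Cy ∩ C i).ncard = 2) ∨
          (∃ j, (Cy ∩ C j).ncard = 3 ∧ ∀ i, i ≠ j → (Cy ∩ C i).ncard = 2)) ∧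
        ((∃ j, (Cy ∩ C j).ncard = 3 ∧ ∀ i, i ≠ j → (Cy ∩ C i).ncard = 2) →
          {w ∈ M.E \ ⋃ i, C i | IsCircuit M (insert w (Cy \ {y}))}.ncard ≤ 3 * t - 1) := by
  classical
  rintro y ⟨hyE, hyU⟩
  -- choose a transversal of the cocircuits
  have hCne : ∀ i, (C i).Nonempty := fun i => (hC i).nonempty'
  choose x hx using hCne
  have hxE : ∀ i, x i ∈ M.E := fun i => (hC i).subset_ground' (hx i)
  have hxinj : Function.Injective x := by
    intro i j hij
    by_contra hne
    exact Set.disjoint_left.1 (hdisj i j hne) (hx i) (hij ▸ hx j)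
  have hyx : y ∉ Set.range x := by
    rintro ⟨i, rfl⟩
    exact hyU (mem_iUnion.2 ⟨i, hx i⟩)
  have hyCi : ∀ i, y ∉ C i := fun i h => hyU (mem_iUnion.2 ⟨i, h⟩)
  set X : Set α := insert y (Set.range x) with hXdef
  have hXE : X ⊆ M.E := insert_subset hyE (by rintro _ ⟨i, rfl⟩; exact hxE i)
  have hrange_card : (Set.range x).ncard = t - 1 := by
    rw [← Set.image_univ, Set.ncard_image_of_injective _ hxinj, Set.ncard_univ]
    simp
  have hXcard : X.ncard = t := by
    rw [hXdef, Set.ncard_insert_of_notMem hyx (Set.finite_range x), hrange_card]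
    omega
  obtain ⟨⟨Cy, hCy, hCycard, hXCy⟩, -⟩ := hprop X hXE hXcard
  have hyCy : y ∈ Cy := hXCy (mem_insert _ _)
  have hxCy : ∀ i, x i ∈ Cy := fun i => hXCy (mem_insert_of_mem _ ⟨i, rfl⟩)
  have hCyE : Cy ⊆ M.E := hCy.subset_ground'
  have hCyfin : Cy.Finite := hfin.subset hCyE
  have hEcard : t ≤ M.E.ncard := by
    have := Set.ncard_le_ncard hCyE hfin
    omega
  -- intersection cardinalities
  set f : Fin (t - 1) → ℕ := fun i => (Cy ∩ C i).ncard with hfdef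
  have hf2 : ∀ i, 2 ≤ f i := by
    intro i
    have hfin' : (Cy ∩ C i).Finite := hCyfin.inter_of_left _
    have hpos : 0 < f i := (Set.ncard_pos hfin').2 ⟨x i, hxCy i, hx i⟩
    have hne1 : f i ≠ 1 := by
      intro h1
      obtain ⟨e, he⟩ := Set.ncard_eq_one.1 h1
      exact circ_cocirc_inter_ne_singleton hCy (hC i) e he
    omega
  have hsumle : ∑ i, f i ≤ 2 * t - 1 := by
    have hU : (⋃ i ∈ (Finset.univ : Finset (Fin (t - 1))), (Cy ∩ C i)) ⊆ Cy \ {y} := by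
      intro z hz
      obtain ⟨i, -, hzi⟩ := Set.mem_iUnion₂.1 hz
      exact ⟨hzi.1, fun h => hyCi i (h ▸ hzi.2)⟩
    have hcardU := Set.ncard_le_ncard hU (hCyfin.diff)
    rw [ncard_biUnion_eq _ _ (fun i => hCyfin.inter_of_left _)
      (fun i j hij => (hdisj i j hij).mono inter_subset_right inter_subset_right)] at hcardU
    rwa [Set.ncard_diff_singleton_of_mem hyCy, hCycard] at hcardU
  have hsumge : 2 * (t - 1) ≤ ∑ i, f i := by
    have := Finset.card_nsmul_le_sum Finset.univ f 2 (fun i _ => hf2 i)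
    simpa [mul_comm] using this
  have hcase : (∀ i, f i = 2) ∨ (∃ j, f j = 3 ∧ ∀ i, i ≠ j → f i = 2) := by
    by_cases hall : ∀ i, f i = 2
    · exact Or.inl hall
    · push_neg at hall
      obtain ⟨j, hj⟩ := hall
      have hjmem : j ∈ Finset.univ := Finset.mem_univ j
      have hsplit := Finset.add_sum_erase Finset.univ f hjmem
      have herasecard : (Finset.univ.erase j).card = t - 1 - 1 := by
        rw [Finset.card_erase_of_mem hjmem, Finset.card_univ, Fintype.card_fin]
      have herasele : 2 * (t - 1 - 1) ≤ ∑ i ∈ Finset.univ.erase j, f i := by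
        have := Finset.card_nsmul_le_sum (Finset.univ.erase j) f 2
          (fun i _ => hf2 i)
        rw [herasecard] at this
        simpa [mul_comm] using this
      have hnpos : 0 < t - 1 := j.pos
      have hj3 : f j = 3 := by
        have h2j := hf2 j
        omega
      refine Or.inr ⟨j, hj3, fun i hij => ?_⟩
      have himem : i ∈ Finset.univ.erase j := Finset.mem_erase.2 ⟨hij, Finset.mem_univ i⟩
      have hsplit2 := Finset.add_sum_erase (Finset.univ.erase j) f himem
      have herasecard2 : ((Finset.univ.erase j).erase i).card = t - 1 - 2 := by
        rw [Finset.card_erase_of_mem himem, herasecard]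
        omega
      have herasele2 : 2 * (t - 1 - 2) ≤ ∑ k ∈ (Finset.univ.erase j).erase i, f k := by
        have := Finset.card_nsmul_le_sum ((Finset.univ.erase j).erase i) f 2
          (fun k _ => hf2 k)
        rw [herasecard2] at this
        simpa [mul_comm] using this
      have hnpos2 : 2 ≤ t - 1 := by
        have hcard2 : 2 ≤ Fintype.card (Fin (t - 1)) :=
          Fintype.one_lt_card_iff_nontrivial.2 ⟨⟨i, j, hij⟩⟩
        simpa using hcard2
      have h2i := hf2 i
      omega
  refine ⟨Cy, hCy, hCycard, hyCy, hcase, fun _ => ?_⟩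
  -- the bound on the number of circuit-completions of S = Cy \ {y}
  set S : Set α := Cy \ {y} with hSdef
  have hSE : S ⊆ M.E := diff_subset.trans hCyE
  have hSfin : S.Finite := hCyfin.diff
  have hScard : S.ncard = 2 * t - 1 := by
    rw [hSdef, Set.ncard_diff_singleton_of_mem hyCy, hCycard]
  have hSindep : M.Indep S := hCy.ssubset_indep (sdiff_singleton_ssubset.2 hyCy)
  have hxS : ∀ i, x i ∈ S := fun i => ⟨hxCy i, fun h => hyCi i (h ▸ hx i)⟩
  set W : Set α := {w ∈ M.E \ ⋃ i, C i | IsCircuit M (insert w S)} with hWdef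
  have hWE : W ⊆ M.E := fun w hw => hw.1.1
  have hWfin : W.Finite := hfin.subset hWE
  have hWS : ∀ w ∈ W, w ∉ S := by
    intro w hw hwS
    have h2 : IsCircuit M (insert w S) := hw.2
    rw [insert_eq_of_mem hwS] at h2
    exact hSindep.not_dep h2.1
  have hWcl : ∀ w ∈ W, w ∈ M.closure S := by
    intro w hw
    rw [hSindep.mem_closure_iff]
    left
    exact hw.2.1
  -- every (t+1)-element subset of W is a circuit
  have hsubcirc : ∀ T, T ⊆ W → T.ncard = t + 1 → IsCircuit M T := by
    intro T hTW hTcard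
    have hTE : T ⊆ M.E := hTW.trans hWE
    have hTfin : T.Finite := hWfin.subset hTW
    have hTdep : M.Dep T := by
      rw [← Matroid.not_indep_iff hTE]
      intro hTindep
      -- T is independent: extend to a basis of S ∪ T
      have hSTcl : S ∪ T ⊆ M.closure S :=
        union_subset (M.subset_closure S hSE) (fun w hw => hWcl w (hTW hw))
      have hSbasis : M.IsBasis S (S ∪ T) :=
        hSindep.isBasis_of_subset_of_subset_closure subset_union_left hSTcl
      obtain ⟨B, hB, hTB⟩ := hTindep.subset_isBasis_of_subset subset_union_right
        (union_subset hSE hTE)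
      have hBfin : B.Finite := hfin.subset hB.indep.subset_ground
      have hBcard : B.ncard = 2 * t - 1 := by
        have hBS := hB.encard_eq_encard hSbasis
        rw [Set.ncard_def, hBS, ← Set.ncard_def, hScard]
      have hle : t + 1 ≤ 2 * t - 1 := by
        have := Set.ncard_le_ncard hTB hBfin
        omega
      have ht2 : 2 ≤ t := by omega
      set S' : Set α := B \ T with hS'def
      have hS'S : S' ⊆ S := by
        rintro z ⟨hzB, hzT⟩
        rcases hB.subset hzB with h | h
        · exact h
        · exact absurd h hzT
      have hS'card : S'.ncard = t - 2 := by
        rw [hS'def, Set.ncard_diff hTB hTfin, hBcard, hTcard]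
        omega
      have hS'fin : S'.Finite := hBfin.diff
      -- pigeonhole: some C i0 avoids S'
      have hmiss : ∃ i0, S' ∩ C i0 = ∅ := by
        by_contra hmiss
        push_neg at hmiss
        choose g hg using hmiss
        have hginj : Function.Injective g := by
          intro i j hij
          by_contra hne'
          exact Set.disjoint_left.1 (hdisj i j hne') (hg i).2 (hij ▸ (hg j).2)
        have hrange : Set.range g ⊆ S' := by
          rintro _ ⟨i, rfl⟩
          exact (hg i).1
        have hcardle : t - 1 ≤ t - 2 := by
          have h1 : (Set.range g).ncard = t - 1 := by
            rw [← Set.image_univ, Set.ncard_image_of_injective _ hginj, Set.ncard_univ]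
            simp
          have := Set.ncard_le_ncard hrange hS'fin
          rw [h1, hS'card] at this
          exact this
        omega
      obtain ⟨i0, hi0⟩ := hmiss
      -- B avoids C i0 but spans x i0 ∈ C i0
      have hBsub : B ⊆ M.E \ C i0 := by
        intro z hzB
        refine ⟨hB.indep.subset_ground hzB, fun hzC => ?_⟩
        by_cases hzT : z ∈ T
        · exact (hTW hzT).1.2 (mem_iUnion.2 ⟨i0, hzC⟩)
        · have : z ∈ S' ∩ C i0 := ⟨⟨hzB, hzT⟩, hzC⟩
          rw [hi0] at this
          exact this
      have hxcl : x i0 ∈ M.closure B := hB.subset_closure (Or.inl (hxS i0))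
      exact (hC i0).not_mem_closure_compl (hx i0)
        (M.closure_subset_closure hBsub hxcl)
    obtain ⟨C0, hC0T, hC0⟩ := exists_circuit_subset hfin hTdep
    have hC0big : t < C0.ncard := circuit_ncard_gt ht hprop hEcard hC0
    have : T = C0 := (Set.eq_of_subset_of_ncard_le hC0T (by omega) hTfin).symm
    rwa [this]
  -- now use a cocircuit through t elements of W
  by_contra hbig
  push_neg at hbig
  have hW3t : 3 * t ≤ W.ncard := by omega
  obtain ⟨X1, hX1W, hX1card⟩ := Set.exists_subset_card_eq (show t ≤ W.ncard by omega)
  obtain ⟨-, D, hD, hDcard, hX1D⟩ := hprop X1 (hX1W.trans hWE) hX1card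
  have hDfin : D.Finite := hfin.subset hD.subset_ground'
  have hX1fin : X1.Finite := hWfin.subset hX1W
  have hX1ne : X1.Nonempty := by
    rw [← Set.ncard_pos hX1fin, hX1card]; exact ht
  obtain ⟨w1, hw1⟩ := hX1ne
  have hWD : t ≤ (W \ D).ncard := by
    have := Set.le_ncard_diff D W hDfin
    omega
  obtain ⟨T, hTWD, hTcard⟩ := Set.exists_subset_card_eq hWD
  have hw1T : w1 ∉ T := fun h => (hTWD h).2 (hX1D hw1)
  set R : Set α := insert w1 T with hRdef
  have hRW : R ⊆ W := insert_subset (hX1W hw1) (hTWD.trans diff_subset)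
  have hRcard : R.ncard = t + 1 := by
    rw [hRdef, Set.ncard_insert_of_notMem hw1T (hWfin.subset (hTWD.trans diff_subset)),
      hTcard]
  have hRcirc : IsCircuit M R := hsubcirc R hRW hRcard
  have hRD : R ∩ D = {w1} := by
    apply subset_antisymm
    · rintro z ⟨hzR, hzD⟩
      rcases hzR with rfl | hzT
      · exact rfl
      · exact absurd hzD (hTWD hzT).2
    · rintro z rfl
      exact ⟨mem_insert _ _, hX1D hw1⟩
  exact circ_cocirc_inter_ne_singleton hRcirc hD w1 hRD
end
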